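/- Key step of the irreducibility proof: suppose the rational fully-mixed equilibrium satisfies x*_{i s} = c_{is}/b (positive integers c_{is}, common denominator b) and ∑_{j≠i} A^{(ij)} x*_j = 0 for all i. If state y' is reached from state y in one step by the pure profile s̄ (i.e., y'ᵢ = yᵢ + ∑_{j≠i} A^{(ij)} e_{s̄ⱼ}), then playing, over the next b−1 steps, each pure strategy sⱼ of player j exactly c_{j sⱼ} times except s̄ⱼ which is played c_{j s̄ⱼ} − 1 times, returns the chain from y' exactly to y: the total accumulated payoff over these b steps (including the original step) is b·∑_{j≠i} A^{(ij)} x*_j = 0 for each player i. -/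

import Mathlib

open Finset Matrix

/-- Key algebraic step of the irreducibility proof. If the rational
fully-mixed equilibrium satisfies `x*_{js} = c_{js}/b` and
`∑_{j≠i} A^{(ij)} x*_j = 0` for all `i`, then the payoff accumulated by the
initial step with profile `s̄` plus the next `b−1` steps in which player `j`
plays each pure strategy `sⱼ` exactly `c_{j sⱼ}` times except `s̄ⱼ`, played
`c_{j s̄ⱼ} − 1` times, equals `b · ∑_{j≠i} A^{(ij)} x*_j = 0`: the chain returns
exactly to the starting state. -/
theorem irreducibility_return_identity
    (N : ℕ) (S : Fin N → ℕ)
    (A : ∀ i j : Fin N, Matrix (Fin (S i)) (Fin (S j)) ℝ)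
    (xstar : ∀ j, Fin (S j) → ℝ)
    (b : ℕ) (hb : 0 < b)
    (c : ∀ j, Fin (S j) → ℕ) (hc : ∀ j k, 0 < c j k)
    (hrat : ∀ j k, xstar j k = (c j k : ℝ) / b)
    (hNE : ∀ i, ∑ j ∈ Finset.univ.erase i, (A i j).mulVec (xstar j) = 0)
    (sbar : ∀ j, Fin (S j)) (i : Fin N) :
    (∑ j ∈ Finset.univ.erase i, (A i j).mulVec (Pi.single (sbar j) 1)) +
      (∑ j ∈ Finset.univ.erase i,
        (((c j (sbar j) : ℝ) - 1) • (A i j).mulVec (Pi.single (sbar j) 1) +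
          ∑ k ∈ Finset.univ.erase (sbar j),
            (c j k : ℝ) • (A i j).mulVec (Pi.single k 1)))
      = (b : ℝ) • ∑ j ∈ Finset.univ.erase i, (A i j).mulVec (xstar j)
    ∧
    (∑ j ∈ Finset.univ.erase i, (A i j).mulVec (Pi.single (sbar j) 1)) +
      (∑ j ∈ Finset.univ.erase i,
        (((c j (sbar j) : ℝ) - 1) • (A i j).mulVec (Pi.single (sbar j) 1) +
          ∑ k ∈ Finset.univ.erase (sbar j),
            (c j k : ℝ) • (A i j).mulVec (Pi.single k 1)))
      = 0 := by
  have key : ∀ j : Fin N,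
      (A i j).mulVec (Pi.single (sbar j) 1) +
        (((c j (sbar j) : ℝ) - 1) • (A i j).mulVec (Pi.single (sbar j) 1) +
          ∑ k ∈ Finset.univ.erase (sbar j),
            (c j k : ℝ) • (A i j).mulVec (Pi.single k 1))
      = (b : ℝ) • (A i j).mulVec (xstar j) := by
    intro j
    funext m
    have hb' : (b : ℝ) ≠ 0 := Nat.cast_ne_zero.mpr hb.ne'
    have hk : ∀ k, (A i j).mulVec (Pi.single k 1) m = A i j m k := by
      intro k
      simp [Matrix.mulVec_single]
    simp only [Pi.add_apply, Pi.smul_apply, smul_eq_mul, Finset.sum_apply, hk]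
    have h2 : (A i j).mulVec (xstar j) m = ∑ k, A i j m k * ((c j k : ℝ) / b) := by
      simp only [Matrix.mulVec, dotProduct]
      exact Finset.sum_congr rfl fun k _ => by rw [hrat]
    rw [h2, Finset.mul_sum]
    have h3 : ∀ k : Fin (S j), (b : ℝ) * (A i j m k * ((c j k : ℝ) / b))
        = (c j k : ℝ) * A i j m k := by
      intro k; field_simp
    rw [Finset.sum_congr rfl fun k _ => h3 k,
      ← Finset.add_sum_erase _ _ (Finset.mem_univ (sbar j))]
    ring
  have main : (∑ j ∈ Finset.univ.erase i, (A i j).mulVec (Pi.single (sbar j) 1)) +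
      (∑ j ∈ Finset.univ.erase i,
        (((c j (sbar j) : ℝ) - 1) • (A i j).mulVec (Pi.single (sbar j) 1) +
          ∑ k ∈ Finset.univ.erase (sbar j),
            (c j k : ℝ) • (A i j).mulVec (Pi.single k 1)))
      = (b : ℝ) • ∑ j ∈ Finset.univ.erase i, (A i j).mulVec (xstar j) := by
    rw [← Finset.sum_add_distrib, Finset.smul_sum]
    exact Finset.sum_congr rfl fun j _ => key j
  exact ⟨main, by rw [main, hNE i, smul_zero]⟩
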